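/- (Lemma 'hilfslemmatheo'.) Let m ≥ 2 be an integer and let (X_t)_{t≥1} be a stochastic process on a probability space, adapted to a filtration (F_t), taking values in {1, …, m}, and suppose there are constants c₁ ∈ (0,1) and c₂ ∈ (0,1) such that for every t ≥ 1, almost surely the conditional probability Pr[X_{t+1} ≤ c₁·X_t | F_t] ≥ 1 − X_t^{−c₂}. Let T = min{t ∈ ℕ : X_t = 1}. Then there exists a constant K (depending only on c₁ and c₂) such that for all sufficiently large m, Pr[T ≤ K·(log m)²] ≥ 1 − m^{−4}. -/

import Mathlib

set_option maxHeartbeats 1000000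

open MeasureTheory
open scoped MeasureTheory

/-- next value in the descent chain -/
noncomputable def nxt (c₁ : ℝ) (x : ℕ) : ℕ := min ⌊c₁ * x⌋₊ (x - 1)

lemma nxt_lt {c₁ : ℝ} {x : ℕ} (hx : 1 ≤ x) : nxt c₁ x < x :=
  lt_of_le_of_lt (min_le_right _ _) (by omega)

lemma nxt_mono {c₁ : ℝ} (hc₁ : 0 ≤ c₁) : Monotone (nxt c₁) := by
  intro a b hab
  have : c₁ * a ≤ c₁ * b := by
    have : (a:ℝ) ≤ b := Nat.cast_le.2 hab
    nlinarith
  exact min_le_min (Nat.floor_le_floor this) (by omega)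

lemma nxt_cast_le {c₁ : ℝ} (hc₁ : 0 ≤ c₁) (x : ℕ) : (nxt c₁ x : ℝ) ≤ c₁ * x := by
  calc (nxt c₁ x : ℝ) ≤ (⌊c₁ * x⌋₊ : ℝ) := by exact_mod_cast Nat.cast_le.2 (min_le_left _ _)
    _ ≤ c₁ * x := Nat.floor_le (by positivity)

/-- depth of the descent chain -/
noncomputable def Dd (c₁ : ℝ) (x : ℕ) : ℕ :=
  if x ≤ 1 then 0 else Dd c₁ (nxt c₁ x) + 1
termination_by x
decreasing_by exact nxt_lt (by omega)

lemma Dd_le_one (c₁ : ℝ) {x : ℕ} (hx : x ≤ 1) : Dd c₁ x = 0 := by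
  rw [Dd]; simp [hx]

lemma Dd_eq (c₁ : ℝ) {x : ℕ} (hx : 2 ≤ x) : Dd c₁ x = Dd c₁ (nxt c₁ x) + 1 := by
  rw [Dd]; simp [show ¬ x ≤ 1 by omega]

lemma Dd_mono {c₁ : ℝ} (hc₁ : 0 ≤ c₁) : Monotone (Dd c₁) := by
  intro a b hab
  induction b using Nat.strong_induction_on generalizing a with
  | _ b ih =>
    rcases le_or_gt b 1 with hb | hb
    · rw [Dd_le_one c₁ hb, Dd_le_one c₁ (le_trans hab hb)]
    · rcases le_or_gt a 1 with ha | ha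
      · rw [Dd_le_one c₁ ha]; exact Nat.zero_le _
      · have ea := Dd_eq c₁ (show 2 ≤ a by omega)
        have eb := Dd_eq c₁ (show 2 ≤ b by omega)
        have h1 : nxt c₁ b < b := nxt_lt (by omega)
        have := ih (nxt c₁ b) h1 (nxt_mono hc₁ hab)
        omega

section LogBound

lemma Dd_le_log {c₁ : ℝ} (hc₁ : 0 < c₁) (hc₁' : c₁ < 1) (x : ℕ) (hx : 1 ≤ x) :
    (Dd c₁ x : ℝ) ≤ Real.log x / Real.log c₁⁻¹ + 1 := by
  have hL : 0 < Real.log c₁⁻¹ := Real.log_pos (by rw [lt_inv_comm₀] <;> simp [hc₁, hc₁'])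
  have hLc : Real.log c₁⁻¹ = - Real.log c₁ := Real.log_inv c₁
  induction x using Nat.strong_induction_on with
  | _ x ih =>
    rcases le_or_gt x 1 with h1 | h1
    · rw [Dd_le_one c₁ h1]
      have hlogx : (0:ℝ) ≤ Real.log x := Real.log_nonneg (by exact_mod_cast hx)
      have : (0:ℝ) ≤ Real.log x / Real.log c₁⁻¹ := div_nonneg hlogx hL.le
      push_cast
      linarith
    · rw [Dd_eq c₁ (by omega)]
      set n := nxt c₁ x with hn
      have hnx : n < x := nxt_lt (by omega)
      have hlogx : (0:ℝ) ≤ Real.log x := Real.log_nonneg (by exact_mod_cast hx)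
      have hdiv : (0:ℝ) ≤ Real.log x / Real.log c₁⁻¹ := div_nonneg hlogx hL.le
      rcases Nat.eq_zero_or_pos n with h0 | hpos
      · rw [h0, Dd_le_one c₁ (by omega : (0:ℕ) ≤ 1)]
        push_cast
        linarith
      · have ihn := ih n hnx hpos
        have hle : (n:ℝ) ≤ c₁ * x := nxt_cast_le hc₁.le x
        have hlog : Real.log n ≤ Real.log c₁ + Real.log x := by
          calc Real.log n ≤ Real.log (c₁ * x) :=
                Real.log_le_log (by exact_mod_cast hpos) hle
            _ = Real.log c₁ + Real.log x := by
                rw [Real.log_mul (ne_of_gt hc₁) (by positivity)]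
        have key : Real.log (n:ℝ) / Real.log c₁⁻¹ + 1 ≤ Real.log x / Real.log c₁⁻¹ := by
          rw [div_add' _ _ _ (ne_of_gt hL), div_le_div_iff₀ hL hL]
          nlinarith [hL, hlog]
        push_cast
        linarith

end LogBound

noncomputable def Qq (c₁ c₂ : ℝ) (x : ℕ) : ℝ :=
  if x ≤ 1 then 1 else
    min (Qq c₁ c₂ (x-1)) ((1 - (x:ℝ) ^ (-c₂)) * Qq c₁ c₂ (nxt c₁ x))
termination_by x
decreasing_by
  · omega
  · exact nxt_lt (by omega)

lemma Qq_le_one' {c₂ : ℝ} {x : ℕ} (hx : x ≤ 1) (c₁ : ℝ) : Qq c₁ c₂ x = 1 := by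
  rw [Qq]; simp [hx]

lemma Qq_eq (c₁ c₂ : ℝ) {x : ℕ} (hx : 2 ≤ x) :
    Qq c₁ c₂ x = min (Qq c₁ c₂ (x-1)) ((1 - (x:ℝ) ^ (-c₂)) * Qq c₁ c₂ (nxt c₁ x)) := by
  rw [Qq]; simp [show ¬ x ≤ 1 by omega]

section Qprops

variable {c₁ c₂ : ℝ} (hc₁ : 0 < c₁) (hc₁' : c₁ < 1) (hc₂ : 0 < c₂)

/-- antitonicity of `y ↦ y ^ (-c₂)` on naturals -/
lemma rpow_neg_anti (hc₂ : 0 < c₂) {a b : ℕ} (ha : 0 < a) (hab : a ≤ b) :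
    (b:ℝ) ^ (-c₂) ≤ (a:ℝ) ^ (-c₂) :=
  Real.rpow_le_rpow_of_nonpos (by exact_mod_cast ha) (by exact_mod_cast hab) (by linarith)

lemma rpow_neg_lt_one (hc₂ : 0 < c₂) {x : ℕ} (hx : 2 ≤ x) : (x:ℝ) ^ (-c₂) < 1 :=
  Real.rpow_lt_one_of_one_lt_of_neg (by exact_mod_cast (by omega : 1 < x)) (by linarith)

include hc₂ in
lemma Qq_pos : ∀ x : ℕ, 0 < Qq c₁ c₂ x := by
  intro x
  induction x using Nat.strong_induction_on with
  | _ x ih =>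
    rcases le_or_gt x 1 with h1 | h1
    · rw [Qq_le_one' h1]; norm_num
    · rw [Qq_eq c₁ c₂ (by omega)]
      have h2 : (x:ℝ) ^ (-c₂) < 1 := rpow_neg_lt_one hc₂ (by omega)
      exact lt_min (ih (x-1) (by omega))
        (mul_pos (by linarith) (ih (nxt c₁ x) (nxt_lt (by omega))))

include hc₂ in
lemma Qq_le_one : ∀ x : ℕ, Qq c₁ c₂ x ≤ 1 := by
  intro x
  induction x using Nat.strong_induction_on with
  | _ x ih =>
    rcases le_or_gt x 1 with h1 | h1
    · rw [Qq_le_one' h1]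
    · rw [Qq_eq c₁ c₂ (by omega)]
      exact le_trans (min_le_left _ _) (ih (x-1) (by omega))

include hc₂ in
lemma Qq_anti : ∀ {a b : ℕ}, a ≤ b → Qq c₁ c₂ b ≤ Qq c₁ c₂ a := by
  have succ : ∀ x : ℕ, Qq c₁ c₂ (x+1) ≤ Qq c₁ c₂ x := by
    intro x
    rcases le_or_gt (x+1) 1 with h1 | h1
    · rw [Qq_le_one' h1, Qq_le_one' (by omega)]
    · rw [Qq_eq c₁ c₂ (by omega)]
      simpa using min_le_left _ _
  intro a b hab
  exact antitone_nat_of_succ_le succ hab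

include hc₁ hc₂ in
lemma Qq_ge_pow : ∀ x : ℕ, (1 - (2:ℝ) ^ (-c₂)) ^ (Dd c₁ x) ≤ Qq c₁ c₂ x := by
  have hp0 : (0:ℝ) < 1 - (2:ℝ) ^ (-c₂) := by
    have := rpow_neg_lt_one hc₂ (le_refl 2); push_cast at this ⊢; linarith
  have hp1 : 1 - (2:ℝ) ^ (-c₂) ≤ 1 := by
    have : (0:ℝ) < (2:ℝ) ^ (-c₂) := Real.rpow_pos_of_pos (by norm_num) _
    linarith
  intro x
  induction x using Nat.strong_induction_on with
  | _ x ih =>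
    rcases le_or_gt x 1 with h1 | h1
    · rw [Qq_le_one' h1]
      exact pow_le_one₀ hp0.le hp1
    · rw [Qq_eq c₁ c₂ (by omega)]
      refine le_min ?_ ?_
      · refine le_trans (pow_le_pow_of_le_one hp0.le hp1 ?_) (ih (x-1) (by omega))
        exact Dd_mono hc₁.le (by omega)
      · rw [Dd_eq c₁ (by omega), pow_succ, mul_comm]
        have hx2 : (x:ℝ) ^ (-c₂) ≤ (2:ℝ) ^ (-c₂) := by
          have := rpow_neg_anti hc₂ (by norm_num : 0 < 2) (show 2 ≤ x by omega)
          push_cast at this ⊢; linarith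
        refine mul_le_mul (by linarith) (ih (nxt c₁ x) (nxt_lt (by omega))) ?_ ?_
        · positivity
        · linarith [rpow_neg_lt_one hc₂ (show 2 ≤ x by omega)]

end Qprops

lemma Qq_lower {c₁ c₂ : ℝ} (hc₁ : 0 < c₁) (hc₁' : c₁ < 1) (hc₂ : 0 < c₂) :
    ∃ δ : ℝ, 0 < δ ∧ δ < 1 ∧ ∀ x : ℕ, δ ≤ Qq c₁ c₂ x := by
  have hp0 : (0:ℝ) < 1 - (2:ℝ) ^ (-c₂) := by
    have := rpow_neg_lt_one hc₂ (le_refl 2); push_cast at this ⊢; linarith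
  -- the quantity c₁ ^ (-c₂) is > 1
  have hcc : 1 < c₁ ^ (-c₂) := by
    rw [Real.one_lt_rpow_iff_of_pos hc₁]
    right; exact ⟨hc₁', by linarith⟩
  set β : ℝ := (c₁ ^ (-c₂) - 1)⁻¹ with hβdef
  have hβ : 0 < β := by rw [hβdef]; exact inv_pos.2 (by linarith)
  have hβmul : β * (c₁ ^ (-c₂) - 1) = 1 := inv_mul_cancel₀ (by linarith)
  set z : ℝ := 2 * (1 + β) with hzdef
  have hz : 1 < z := by rw [hzdef]; nlinarith
  set A : ℕ := ⌈z ^ (c₂⁻¹)⌉₊ + 2 with hAdef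
  have hA2 : 2 ≤ A := by omega
  have hAz : z ^ (c₂⁻¹) ≤ (A:ℝ) := by
    calc z ^ (c₂⁻¹) ≤ (⌈z ^ (c₂⁻¹)⌉₊ : ℝ) := Nat.le_ceil _
      _ ≤ (A:ℝ) := by exact_mod_cast Nat.le.intro rfl
  -- key : (A:ℝ)^(-c₂) ≤ z⁻¹
  have hAkey : (A:ℝ) ^ (-c₂) ≤ z⁻¹ := by
    have h1 : (A:ℝ) ^ (-c₂) ≤ (z ^ (c₂⁻¹)) ^ (-c₂) :=
      Real.rpow_le_rpow_of_nonpos (Real.rpow_pos_of_pos (by linarith) _) hAz (by linarith)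
    have h2 : (z ^ (c₂⁻¹)) ^ (-c₂) = z⁻¹ := by
      rw [← Real.rpow_mul (by linarith : (0:ℝ) ≤ z),
        show c₂⁻¹ * -c₂ = -1 by field_simp, Real.rpow_neg_one]
    rw [← h2]; exact h1
  set q₀ : ℝ := (1 - (2:ℝ) ^ (-c₂)) ^ (Dd c₁ A) with hq₀def
  have h2pos : (0:ℝ) < (2:ℝ) ^ (-c₂) := Real.rpow_pos_of_pos (by norm_num) _
  have hq₀pos : 0 < q₀ := by positivity
  have hq₀le : q₀ ≤ 1 := pow_le_one₀ hp0.le (by linarith)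
  -- values below A are at least q₀
  have claim1 : ∀ x : ℕ, x ≤ A → q₀ ≤ Qq c₁ c₂ x := by
    intro x hx
    refine le_trans ?_ (Qq_ge_pow hc₁ hc₂ x)
    exact pow_le_pow_of_le_one hp0.le (by linarith) (Dd_mono hc₁.le hx)
  -- positivity facts about x ^ (-c₂)
  have hxpos : ∀ x : ℕ, 0 < x → 0 < (x:ℝ) ^ (-c₂) := fun x hx =>
    Real.rpow_pos_of_pos (by exact_mod_cast hx) _
  -- for x ≥ A : (1+β) * x^(-c₂) ≤ 1/2
  have hbig : ∀ x : ℕ, A ≤ x → (1+β) * (x:ℝ) ^ (-c₂) ≤ 1/2 := by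
    intro x hx
    have h1 : (x:ℝ) ^ (-c₂) ≤ (A:ℝ) ^ (-c₂) := rpow_neg_anti hc₂ (by omega) hx
    have h2 : (A:ℝ) ^ (-c₂) ≤ z⁻¹ := hAkey
    have hzpos : (0:ℝ) < z := by linarith
    have h3 : (1+β) * z⁻¹ = 1/2 := by rw [hzdef]; field_simp
    calc (1+β) * (x:ℝ) ^ (-c₂) ≤ (1+β) * z⁻¹ := by
          have := le_trans h1 h2; nlinarith
      _ = 1/2 := h3
  -- main induction for x ≥ A
  have claim2 : ∀ x : ℕ, A ≤ x →
      (1 - (1/2 - β * (x:ℝ) ^ (-c₂))) * q₀ ≤ Qq c₁ c₂ x := by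
    intro x
    induction x using Nat.strong_induction_on with
    | _ x ih =>
      intro hAx
      have hx2 : 2 ≤ x := le_trans hA2 hAx
      have hxc : 0 < (x:ℝ) ^ (-c₂) := hxpos x (by omega)
      have hσ0 : 0 ≤ 1/2 - β * (x:ℝ) ^ (-c₂) := by
        have := hbig x hAx; nlinarith
      have hσhalf : 1/2 - β * (x:ℝ) ^ (-c₂) ≤ 1/2 := by nlinarith
      rw [Qq_eq c₁ c₂ hx2]
      refine le_min ?_ ?_
      · -- first branch : Qq (x-1)
        rcases lt_or_ge (x-1) A with h | h
        · calc (1 - (1/2 - β * (x:ℝ) ^ (-c₂))) * q₀ ≤ 1 * q₀ := by nlinarith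
            _ = q₀ := one_mul _
            _ ≤ Qq c₁ c₂ (x-1) := claim1 _ (by omega)
        · have ihx := ih (x-1) (by omega) h
          have hmono : (x:ℝ) ^ (-c₂) ≤ ((x-1:ℕ):ℝ) ^ (-c₂) :=
            rpow_neg_anti hc₂ (by omega) (by omega)
          have hco : (1 - (1/2 - β * (x:ℝ) ^ (-c₂))) ≤ (1 - (1/2 - β * ((x-1:ℕ):ℝ) ^ (-c₂))) := by
            nlinarith
          exact le_trans (mul_le_mul_of_nonneg_right hco hq₀pos.le) ihx
      · -- second branch
        set n := nxt c₁ x with hn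
        have hnx : n < x := nxt_lt (by omega)
        have h1x : (x:ℝ) ^ (-c₂) ≤ 1/2 := by
          nlinarith [hbig x hAx, mul_nonneg hβ.le hxc.le]
        rcases lt_or_ge n A with h | h
        · have hQn : q₀ ≤ Qq c₁ c₂ n := claim1 _ (le_of_lt h)
          have hco : (1 - (1/2 - β * (x:ℝ) ^ (-c₂))) ≤ 1 - (x:ℝ) ^ (-c₂) := by
            have := hbig x hAx
            nlinarith [mul_nonneg hβ.le hxc.le]
          calc (1 - (1/2 - β * (x:ℝ) ^ (-c₂))) * q₀ ≤ (1 - (x:ℝ) ^ (-c₂)) * q₀ :=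
                mul_le_mul_of_nonneg_right hco hq₀pos.le
            _ ≤ (1 - (x:ℝ) ^ (-c₂)) * Qq c₁ c₂ n :=
                mul_le_mul_of_nonneg_left hQn (by linarith)
        · have ihn := ih n hnx h
          have hσn0 : 0 ≤ 1/2 - β * (n:ℝ) ^ (-c₂) := by
            have := hbig n h; nlinarith
          have hσnh : 1/2 - β * (n:ℝ) ^ (-c₂) ≤ 1/2 := by
            have := hxpos n (by omega); nlinarith
          -- key recursion : x^(-c₂) + σ(n) ≤ σ(x)
          have hkey : (x:ℝ) ^ (-c₂) + (1/2 - β * (n:ℝ) ^ (-c₂)) ≤ 1/2 - β * (x:ℝ) ^ (-c₂) := by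
            have hnle : (n:ℝ) ≤ c₁ * x := nxt_cast_le hc₁.le x
            have hnc : (c₁ * (x:ℝ)) ^ (-c₂) ≤ (n:ℝ) ^ (-c₂) :=
              Real.rpow_le_rpow_of_nonpos (by exact_mod_cast (by omega : 0 < n)) hnle (by linarith)
            have hmul : (c₁ * (x:ℝ)) ^ (-c₂) = c₁ ^ (-c₂) * (x:ℝ) ^ (-c₂) :=
              Real.mul_rpow hc₁.le (by positivity)
            have hstep : (1 + β) * (x:ℝ) ^ (-c₂) ≤ β * (n:ℝ) ^ (-c₂) := by
              have hβc : β * (c₁ ^ (-c₂)) = 1 + β := by nlinarith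
              calc (1 + β) * (x:ℝ) ^ (-c₂) = β * (c₁ ^ (-c₂) * (x:ℝ) ^ (-c₂)) := by
                    rw [← mul_assoc, hβc]
                _ = β * ((c₁ * (x:ℝ)) ^ (-c₂)) := by rw [hmul]
                _ ≤ β * (n:ℝ) ^ (-c₂) := by nlinarith
            linarith
          have hQnpos : 0 < Qq c₁ c₂ n := Qq_pos hc₂ n
          -- (1-a)(1-b) ≥ 1-a-b
          have hprod : (1 - ((x:ℝ) ^ (-c₂) + (1/2 - β * (n:ℝ) ^ (-c₂)))) * q₀ ≤
              (1 - (x:ℝ) ^ (-c₂)) * ((1 - (1/2 - β * (n:ℝ) ^ (-c₂))) * q₀) := by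
            nlinarith [mul_nonneg (mul_nonneg hxc.le hσn0) hq₀pos.le]
          calc (1 - (1/2 - β * (x:ℝ) ^ (-c₂))) * q₀
              ≤ (1 - ((x:ℝ) ^ (-c₂) + (1/2 - β * (n:ℝ) ^ (-c₂)))) * q₀ :=
                mul_le_mul_of_nonneg_right (by linarith) hq₀pos.le
            _ ≤ (1 - (x:ℝ) ^ (-c₂)) * ((1 - (1/2 - β * (n:ℝ) ^ (-c₂))) * q₀) := hprod
            _ ≤ (1 - (x:ℝ) ^ (-c₂)) * Qq c₁ c₂ n :=
                mul_le_mul_of_nonneg_left ihn (by linarith)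
  refine ⟨q₀ / 2, by positivity, by nlinarith, ?_⟩
  intro x
  rcases lt_or_ge x A with h | h
  · linarith [claim1 x (le_of_lt h)]
  · have hc2x := claim2 x h
    have hxc : 0 < (x:ℝ) ^ (-c₂) := hxpos x (by omega)
    have hco : q₀ / 2 ≤ (1 - (1/2 - β * (x:ℝ) ^ (-c₂))) * q₀ := by
      nlinarith [mul_nonneg hβ.le hxc.le]
    linarith


/-- **Lemma (hilfslemmatheo).** Let `m ≥ 2` and let `(X_t)_{t≥1}` be a process
with values in `{1, …, m}`, adapted to a filtration `(ℱ_t)`, such that for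
constants `c₁, c₂ ∈ (0,1)` and every `t ≥ 1`, almost surely
`Pr[X_{t+1} ≤ c₁·X_t | ℱ_t] ≥ 1 − X_t^(−c₂)`.  Let `T` be the first hitting
time of the state `1`.  Then there is a constant `K` (depending only on
`c₁, c₂`) such that for all sufficiently large `m`,
`Pr[T ≤ K·(log m)²] ≥ 1 − m^(−4)`. -/
theorem hitting_time_bound (c₁ c₂ : ℝ) (hc₁ : 0 < c₁) (hc₁' : c₁ < 1)
    (hc₂ : 0 < c₂) (hc₂' : c₂ < 1) :
    ∃ K : ℝ, 0 < K ∧ ∃ m₀ : ℕ, ∀ m : ℕ, m₀ ≤ m →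
      ∀ {Ω : Type} [inst : MeasurableSpace Ω] (μ : Measure Ω)
        [IsProbabilityMeasure μ] (ℱ : Filtration ℕ inst) (X : ℕ → Ω → ℕ),
        (∀ t : ℕ, 1 ≤ t → ∀ ω : Ω, 1 ≤ X t ω ∧ X t ω ≤ m) →
        (∀ t : ℕ, 1 ≤ t → Measurable[ℱ t] (X t)) →
        (∀ t : ℕ, 1 ≤ t → ∀ᵐ ω ∂μ,
          1 - (X t ω : ℝ) ^ (-c₂) ≤
            (μ[Set.indicator {ω' : Ω | (X (t + 1) ω' : ℝ) ≤ c₁ * (X t ω' : ℝ)}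
                (fun _ => (1 : ℝ)) | ℱ t]) ω) →
        ENNReal.ofReal (1 - (m : ℝ) ^ (-(4 : ℝ))) ≤
          μ {ω : Ω | (∃ t : ℕ, 1 ≤ t ∧ X t ω = 1) ∧
              ((sInf {t : ℕ | 1 ≤ t ∧ X t ω = 1} : ℕ) : ℝ) ≤
                K * Real.log m ^ 2} := by
  obtain ⟨δ, hδ0, hδ1, hδQ⟩ := Qq_lower hc₁ hc₁' hc₂
  set L : ℝ := Real.log c₁⁻¹ with hLdef
  have hL : 0 < L := Real.log_pos (by rw [lt_inv_comm₀] <;> simp [hc₁, hc₁'])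
  refine ⟨10 / (δ * L) + 1, by positivity, ⌈Real.exp (max 1 L)⌉₊, ?_⟩
  intro m hm Ω inst μ hPM ℱ X hbound hadapt hdrift
  -- basic facts about m
  have hm1 : Real.exp (max 1 L) ≤ (m:ℝ) := by
    have := Nat.ceil_le.1 hm
    exact_mod_cast this
  have hmpos : (0:ℝ) < m := lt_of_lt_of_le (Real.exp_pos _) hm1
  have hm0 : 0 < m := by exact_mod_cast hmpos
  have hlogm : max 1 L ≤ Real.log m := (Real.le_log_iff_exp_le hmpos).2 hm1
  have hlog1 : (1:ℝ) ≤ Real.log m := le_trans (le_max_left _ _) hlogm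
  have hlogL : L ≤ Real.log m := le_trans (le_max_right _ _) hlogm
  have hm2 : 2 ≤ m := by
    have h2 : (2:ℝ) ≤ Real.exp 1 := by
      have := Real.add_one_le_exp 1; linarith
    have : (2:ℝ) ≤ m :=
      le_trans (le_trans h2 (Real.exp_le_exp.2 (le_max_left 1 L))) hm1
    exact_mod_cast this
  -- the descent event
  set E : ℕ → Set Ω :=
      fun t => {ω' : Ω | (X (t + 1) ω' : ℝ) ≤ c₁ * (X t ω' : ℝ)} with hEdef
  have hXc : ∀ t, 1 ≤ t → Measurable[ℱ t] (fun ω => ((X t ω : ℕ) : ℝ)) :=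
    fun t ht => measurable_from_top.comp (hadapt t ht)
  have hEmeas : ∀ t, 1 ≤ t → MeasurableSet[ℱ (t+1)] (E t) := by
    intro t ht
    exact measurableSet_le (hXc (t+1) (by omega))
      (((hXc t ht).mono (ℱ.mono (Nat.le_succ t)) le_rfl).const_mul c₁)
  have hEmeas' : ∀ t, 1 ≤ t → MeasurableSet (E t) :=
    fun t ht => ℱ.le (t+1) _ (hEmeas t ht)
  -- one-step lemma
  have step : ∀ t, 1 ≤ t → ∀ A : Set Ω, MeasurableSet[ℱ t] A → ∀ y : ℕ, 2 ≤ y →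
      (∀ ω ∈ A, X t ω = y) →
      (1 - (y:ℝ) ^ (-c₂)) * (μ A).toReal ≤ (μ (A ∩ E t)).toReal := by
    intro t ht A hA y hy hval
    have hAmeas : MeasurableSet A := ℱ.le t A hA
    set f : Ω → ℝ := Set.indicator (E t) (fun _ => (1:ℝ)) with hfdef
    have hfint : Integrable f μ := (integrable_const (1:ℝ)).indicator (hEmeas' t ht)
    have h1 : ∫ ω in A, (μ[f|ℱ t]) ω ∂μ = ∫ ω in A, f ω ∂μ :=
      setIntegral_condExp (ℱ.le t) hfint hA
    have h2 : ∫ ω in A, f ω ∂μ = (μ (A ∩ E t)).toReal := by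
      rw [hfdef, setIntegral_indicator (hEmeas' t ht), setIntegral_const]
      simp [measureReal_def]
    have h3 : (1 - (y:ℝ) ^ (-c₂)) * (μ A).toReal
        = ∫ _ω in A, (1 - (y:ℝ) ^ (-c₂)) ∂μ := by
      rw [setIntegral_const]; simp [mul_comm, measureReal_def]
    have h4 : ∫ _ω in A, (1 - (y:ℝ) ^ (-c₂)) ∂μ ≤ ∫ ω in A, (μ[f|ℱ t]) ω ∂μ := by
      refine setIntegral_mono_ae_restrict
        (integrableOn_const (measure_ne_top μ A))
        integrable_condExp.integrableOn ?_
      have hdr := hdrift t ht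
      filter_upwards [ae_restrict_of_ae hdr, ae_restrict_mem hAmeas] with ω hω hmem
      have hXω : X t ω = y := hval ω hmem
      rw [← hXω]
      exact hω
    linarith [h1, h2, h3, h4]
  -- hitting events
  set Hit : ℕ → ℕ → Set Ω :=
      fun t l => ⋃ s ∈ Set.Icc t (t + l), {ω | X s ω = 1} with hHitdef
  have hHitmem : ∀ t l ω, ω ∈ Hit t l ↔ ∃ s, t ≤ s ∧ s ≤ t + l ∧ X s ω = 1 := by
    intro t l ω
    simp [hHitdef, Set.mem_iUnion, Set.mem_Icc, and_assoc]
  have hHitmeas : ∀ t l, 1 ≤ t → MeasurableSet[ℱ (t + l)] (Hit t l) := by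
    intro t l ht
    refine MeasurableSet.biUnion (Set.to_countable _) ?_
    intro s hs
    have hs1 : 1 ≤ s := le_trans ht hs.1
    have hsm : MeasurableSet[ℱ s] {ω | X s ω = 1} :=
      (hadapt s hs1) (measurableSet_singleton 1)
    exact ℱ.mono hs.2 _ hsm
  have hHitmeas' : ∀ t l, 1 ≤ t → MeasurableSet (Hit t l) :=
    fun t l ht => ℱ.le (t+l) _ (hHitmeas t l ht)
  -- main descent estimate
  have main : ∀ x : ℕ, ∀ t, 1 ≤ t → ∀ A : Set Ω, MeasurableSet[ℱ t] A →
      (∀ ω ∈ A, X t ω ≤ x) →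
      Qq c₁ c₂ x * (μ A).toReal ≤ (μ (A ∩ Hit t (Dd c₁ x))).toReal := by
    intro x
    induction x using Nat.strong_induction_on with
    | _ x ih =>
      intro t ht A hA hAx
      set Ay : ℕ → Set Ω := fun y => A ∩ {ω | X t ω = y} with hAydef
      have hAymeas : ∀ y, MeasurableSet[ℱ t] (Ay y) :=
        fun y => hA.inter ((hadapt t ht) (measurableSet_singleton y))
      have hAymeas' : ∀ y, MeasurableSet (Ay y) := fun y => ℱ.le t _ (hAymeas y)
      have hcover : A = ⋃ y ∈ Finset.Icc 1 x, Ay y := by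
        ext ω
        simp only [Set.mem_iUnion, Finset.mem_Icc, hAydef, Set.mem_inter_iff,
          Set.mem_setOf_eq]
        constructor
        · intro hω
          exact ⟨X t ω, ⟨(hbound t ht ω).1, hAx ω hω⟩, hω, rfl⟩
        · rintro ⟨y, _, hω, _⟩
          exact hω
      -- the per-value good sets
      set S : ℕ → Set Ω := fun y =>
        if y ≤ 1 then Ay y else (Ay y ∩ E t) ∩ Hit (t+1) (Dd c₁ (nxt c₁ y)) with hSdef
      have hSsub : ∀ y, S y ⊆ Ay y := by
        intro y
        rw [hSdef]
        by_cases h : y ≤ 1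
        · simp [h]
        · simp only [h, if_false]
          exact fun ω hω => hω.1.1
      have hSmeas : ∀ y, MeasurableSet (S y) := by
        intro y
        rw [hSdef]
        by_cases h : y ≤ 1 <;> simp only [h, if_true, if_false]
        · exact hAymeas' y
        · exact ((hAymeas' y).inter (hEmeas' t ht)).inter
            (hHitmeas' (t+1) _ (by omega))
      have hSincl : ∀ y ∈ Finset.Icc 1 x, S y ⊆ A ∩ Hit t (Dd c₁ x) := by
        intro y hy
        rw [Finset.mem_Icc] at hy
        intro ω hω
        rcases le_or_gt y 1 with h1 | h1
        · have hy1 : y = 1 := by omega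
          have hω' : ω ∈ Ay y := hSsub y hω
          refine ⟨hω'.1, ?_⟩
          rw [hHitmem]
          exact ⟨t, le_rfl, by omega, by simpa [hy1] using hω'.2⟩
        · have h2 : ¬ y ≤ 1 := by omega
          rw [hSdef] at hω
          simp only [h2, if_false] at hω
          obtain ⟨hω1, hω2⟩ := hω
          refine ⟨hω1.1.1, ?_⟩
          rw [hHitmem] at hω2 ⊢
          obtain ⟨s, hs1, hs2, hs3⟩ := hω2
          refine ⟨s, by omega, ?_, hs3⟩
          have hDy : Dd c₁ y = Dd c₁ (nxt c₁ y) + 1 := Dd_eq c₁ (by omega)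
          have hDyx : Dd c₁ y ≤ Dd c₁ x := Dd_mono hc₁.le hy.2
          omega
      -- per-value estimate
      have hSest : ∀ y ∈ Finset.Icc 1 x,
          Qq c₁ c₂ x * (μ (Ay y)).toReal ≤ (μ (S y)).toReal := by
        intro y hy
        rw [Finset.mem_Icc] at hy
        rcases le_or_gt y 1 with h1 | h1
        · have : S y = Ay y := by rw [hSdef]; simp [h1]
          rw [this]
          have := Qq_le_one (c₁ := c₁) hc₂ x
          nlinarith [ENNReal.toReal_nonneg (a := μ (Ay y))]
        · have h2 : ¬ y ≤ 1 := by omega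
          have hstep := step t ht (Ay y) (hAymeas y) y (by omega)
            (fun ω hω => hω.2)
          set B : Set Ω := Ay y ∩ E t with hBdef
          have hBmeas : MeasurableSet[ℱ (t+1)] B :=
            (ℱ.mono (Nat.le_succ t) _ (hAymeas y)).inter (hEmeas t ht)
          have hBsub : ∀ ω ∈ B, X (t+1) ω ≤ nxt c₁ y := by
            intro ω hω
            have hXt : X t ω = y := hω.1.2
            have hXle : (X (t+1) ω : ℝ) ≤ c₁ * y := by
              have := hω.2
              rw [hEdef] at this
              simpa [hXt] using this
            have hfl : X (t+1) ω ≤ ⌊c₁ * (y:ℕ)⌋₊ := Nat.le_floor (by exact_mod_cast hXle)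
            have hy1R : (1:ℝ) ≤ (y:ℝ) := by exact_mod_cast hy.1
            have hlt : (X (t+1) ω : ℝ) < y := by nlinarith [hXle, hy1R]
            have hlt' : X (t+1) ω < y := by exact_mod_cast hlt
            exact le_min hfl (by omega)
          have hIH := ih (nxt c₁ y) (lt_of_lt_of_le (nxt_lt (by omega)) hy.2)
            (t+1) (by omega) B hBmeas hBsub
          have hSy : S y = B ∩ Hit (t+1) (Dd c₁ (nxt c₁ y)) := by
            rw [hSdef]; simp [h2, hBdef]
          rw [hSy]
          -- chain of inequalities
          have c1 : Qq c₁ c₂ x ≤ Qq c₁ c₂ y := Qq_anti hc₂ hy.2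
          have c2 : Qq c₁ c₂ y ≤ (1 - (y:ℝ) ^ (-c₂)) * Qq c₁ c₂ (nxt c₁ y) := by
            rw [Qq_eq c₁ c₂ (by omega)]
            exact min_le_right _ _
          have hQn : 0 < Qq c₁ c₂ (nxt c₁ y) := Qq_pos hc₂ _
          have hy2 : (0:ℝ) ≤ 1 - (y:ℝ) ^ (-c₂) := by
            have := rpow_neg_lt_one hc₂ (show 2 ≤ y by omega); linarith
          calc Qq c₁ c₂ x * (μ (Ay y)).toReal
              ≤ ((1 - (y:ℝ) ^ (-c₂)) * Qq c₁ c₂ (nxt c₁ y)) * (μ (Ay y)).toReal := by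
                have := le_trans c1 c2
                exact mul_le_mul_of_nonneg_right this ENNReal.toReal_nonneg
            _ = Qq c₁ c₂ (nxt c₁ y) * ((1 - (y:ℝ) ^ (-c₂)) * (μ (Ay y)).toReal) := by
                ring
            _ ≤ Qq c₁ c₂ (nxt c₁ y) * (μ B).toReal :=
                mul_le_mul_of_nonneg_left hstep hQn.le
            _ ≤ (μ (B ∩ Hit (t+1) (Dd c₁ (nxt c₁ y)))).toReal := hIH
      -- sum everything
      have hdisjAy : (↑(Finset.Icc 1 x) : Set ℕ).PairwiseDisjoint Ay := by
        intro a _ b _ hab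
        refine Set.disjoint_left.2 ?_
        intro ω hωa hωb
        exact hab (by rw [← hωa.2, ← hωb.2])
      have hdisjS : (↑(Finset.Icc 1 x) : Set ℕ).PairwiseDisjoint S := by
        intro a ha b hb hab
        exact Set.disjoint_of_subset (hSsub a) (hSsub b) (hdisjAy ha hb hab)
      have hsum1 : (μ A).toReal = ∑ y ∈ Finset.Icc 1 x, (μ (Ay y)).toReal := by
        rw [hcover, measure_biUnion_finset hdisjAy (fun y _ => hAymeas' y),
          ENNReal.toReal_sum (fun y _ => measure_ne_top μ _)]
      have hsum2 : ∑ y ∈ Finset.Icc 1 x, (μ (S y)).toReal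
          ≤ (μ (A ∩ Hit t (Dd c₁ x))).toReal := by
        rw [← ENNReal.toReal_sum (fun y _ => measure_ne_top μ _),
          ← measure_biUnion_finset hdisjS (fun y _ => hSmeas y)]
        refine ENNReal.toReal_mono (measure_ne_top μ _) (measure_mono ?_)
        exact Set.iUnion₂_subset hSincl
      calc Qq c₁ c₂ x * (μ A).toReal
          = ∑ y ∈ Finset.Icc 1 x, Qq c₁ c₂ x * (μ (Ay y)).toReal := by
            rw [hsum1, Finset.mul_sum]
        _ ≤ ∑ y ∈ Finset.Icc 1 x, (μ (S y)).toReal := Finset.sum_le_sum hSest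
        _ ≤ (μ (A ∩ Hit t (Dd c₁ x))).toReal := hsum2
  -- phases
  set Dm : ℕ := Dd c₁ m with hDmdef
  set g : ℕ → Set Ω :=
      fun i => Nat.rec Set.univ (fun j s => s ∩ (Hit (1 + j * Dm) Dm)ᶜ) i with hgdef
  have hgsucc : ∀ i, g (i+1) = g i ∩ (Hit (1 + i * Dm) Dm)ᶜ := fun i => rfl
  have hgmeas : ∀ i, MeasurableSet[ℱ (1 + i * Dm)] (g i) := by
    intro i
    induction i with
    | zero => exact MeasurableSet.univ
    | succ j ihj =>
      rw [hgsucc j]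
      have hle : 1 + j * Dm + Dm ≤ 1 + (j+1) * Dm := by
        rw [Nat.succ_mul]; omega
      have h1 : MeasurableSet[ℱ (1 + (j+1) * Dm)] (g j) :=
        ℱ.mono (le_trans (by omega) hle) _ ihj
      have h2 : MeasurableSet[ℱ (1 + (j+1) * Dm)] (Hit (1 + j * Dm) Dm) :=
        ℱ.mono hle _ (hHitmeas (1 + j * Dm) Dm (by omega))
      exact h1.inter h2.compl
  have hgmeas' : ∀ i, MeasurableSet (g i) := fun i => ℱ.le _ _ (hgmeas i)
  have hδ1m : (0:ℝ) ≤ 1 - δ := by linarith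
  have hgbound : ∀ i, (μ (g i)).toReal ≤ (1 - δ)^i := by
    intro i
    induction i with
    | zero =>
      simp [hgdef]
    | succ j ihj =>
      have hQm := main m (1 + j * Dm) (by omega) (g j) (hgmeas j)
        (fun ω _ => (hbound _ (by omega) ω).2)
      have hδm : δ * (μ (g j)).toReal ≤ (μ (g j ∩ Hit (1 + j * Dm) Dm)).toReal := by
        refine le_trans ?_ hQm
        exact mul_le_mul_of_nonneg_right (hδQ m) ENNReal.toReal_nonneg
      have hdiff : μ (g j ∩ Hit (1 + j * Dm) Dm) + μ (g (j+1)) = μ (g j) := by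
        rw [hgsucc j, ← Set.diff_eq]
        exact measure_inter_add_diff _ (hHitmeas' _ _ (by omega))
      have htr : (μ (g j ∩ Hit (1 + j * Dm) Dm)).toReal + (μ (g (j+1))).toReal
          = (μ (g j)).toReal := by
        rw [← ENNReal.toReal_add (measure_ne_top μ _) (measure_ne_top μ _), hdiff]
      have : (μ (g (j+1))).toReal ≤ (1 - δ) * (μ (g j)).toReal := by linarith
      calc (μ (g (j+1))).toReal ≤ (1 - δ) * (μ (g j)).toReal := this
        _ ≤ (1 - δ) * (1 - δ)^j := mul_le_mul_of_nonneg_left ihj hδ1m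
        _ = (1 - δ)^(j+1) := by ring
  -- number of phases
  set R : ℕ := ⌈4 * Real.log m / δ⌉₊ with hRdef
  have hRδ : 4 * Real.log m ≤ δ * R := by
    have h1 : 4 * Real.log m / δ ≤ (R:ℝ) := Nat.le_ceil _
    rw [div_le_iff₀ hδ0] at h1
    linarith
  -- time bound
  have htime : (1:ℝ) + R * Dm ≤ (10 / (δ * L) + 1) * Real.log m ^ 2 := by
    set G := Real.log m with hGdef
    have eR : (R:ℝ) ≤ 5 * G / δ := by
      have h1 : (R:ℝ) < 4 * G / δ + 1 := Nat.ceil_lt_add_one (by positivity)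
      have h2 : (1:ℝ) ≤ G / δ := (one_le_div hδ0).2 (le_trans hδ1.le hlog1)
      have h3 : 4 * G / δ + G / δ = 5 * G / δ := by ring
      linarith
    have eD : (Dm:ℝ) ≤ 2 * G / L := by
      have h1 := Dd_le_log hc₁ hc₁' m (by omega)
      have h2 : (1:ℝ) ≤ G / L := (one_le_div hL).2 hlogL
      have h3 : G / L + G / L = 2 * G / L := by ring
      rw [hDmdef]
      calc (Dd c₁ m : ℝ) ≤ G / L + 1 := h1
        _ ≤ 2 * G / L := by linarith
    have hRpos : (0:ℝ) ≤ (R:ℝ) := Nat.cast_nonneg R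
    have hDpos : (0:ℝ) ≤ (Dm:ℝ) := Nat.cast_nonneg Dm
    have hmul : (R:ℝ) * Dm ≤ (5 * G / δ) * (2 * G / L) :=
      mul_le_mul eR eD hDpos (by positivity)
    have hid : (5 * G / δ) * (2 * G / L) = 10 / (δ * L) * G^2 := by
      field_simp; ring
    have hG1 : (1:ℝ) ≤ G^2 := by nlinarith
    have hfin : (10 / (δ * L) + 1) * G^2 = 10 / (δ * L) * G^2 + G^2 := by ring
    linarith [hmul, hid.le, hid.ge]
  -- inclusion into the target event
  have hsub : (g R)ᶜ ⊆ {ω : Ω | (∃ t : ℕ, 1 ≤ t ∧ X t ω = 1) ∧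
      ((sInf {t : ℕ | 1 ≤ t ∧ X t ω = 1} : ℕ) : ℝ) ≤
        (10 / (δ * L) + 1) * Real.log m ^ 2} := by
    intro ω hω
    have hex : ∃ j, j < R ∧ ω ∈ Hit (1 + j * Dm) Dm := by
      by_contra hcon
      push_neg at hcon
      apply hω
      have : ∀ i, i ≤ R → ω ∈ g i := by
        intro i
        induction i with
        | zero => intro _; trivial
        | succ j ihj =>
          intro hiR
          rw [hgsucc j]
          exact ⟨ihj (by omega), hcon j (by omega)⟩
      exact this R le_rfl
    obtain ⟨j, hjR, hj⟩ := hex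
    rw [hHitmem] at hj
    obtain ⟨s, hs1, hs2, hs3⟩ := hj
    have hs0 : 1 ≤ s := by omega
    have hmem : s ∈ {t : ℕ | 1 ≤ t ∧ X t ω = 1} := ⟨hs0, hs3⟩
    refine ⟨⟨s, hs0, hs3⟩, ?_⟩
    have hinf : sInf {t : ℕ | 1 ≤ t ∧ X t ω = 1} ≤ s := Nat.sInf_le hmem
    have hsR : s ≤ 1 + R * Dm := by
      have : (j+1) * Dm ≤ R * Dm := Nat.mul_le_mul_right Dm (by omega)
      rw [Nat.succ_mul] at this
      omega
    have : ((sInf {t : ℕ | 1 ≤ t ∧ X t ω = 1} : ℕ) : ℝ) ≤ 1 + R * Dm := by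
      have h1 : ((sInf {t : ℕ | 1 ≤ t ∧ X t ω = 1} : ℕ) : ℝ) ≤ (s:ℝ) := by
        exact_mod_cast hinf
      have h2 : (s:ℝ) ≤ 1 + R * Dm := by exact_mod_cast hsR
      linarith
    exact le_trans this htime
  -- final probabilistic estimate
  have hpow : (1 - δ)^R ≤ (m:ℝ) ^ (-(4:ℝ)) := by
    have h1 : (1 - δ:ℝ) ≤ Real.exp (-δ) := by
      have := Real.add_one_le_exp (-δ); linarith
    have h2 : ((1:ℝ) - δ)^R ≤ Real.exp (-δ)^R := pow_le_pow_left₀ hδ1m h1 R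
    have h3 : Real.exp (-δ)^R = Real.exp ((R:ℝ) * (-δ)) := (Real.exp_nat_mul _ R).symm
    have h4 : Real.exp ((R:ℝ) * (-δ)) ≤ Real.exp (Real.log m * (-4)) := by
      apply Real.exp_le_exp.2
      nlinarith
    have h5 : (m:ℝ) ^ (-(4:ℝ)) = Real.exp (Real.log m * (-(4:ℝ))) :=
      Real.rpow_def_of_pos hmpos _
    rw [h5]
    calc ((1:ℝ) - δ)^R ≤ Real.exp (-δ)^R := h2
      _ = Real.exp ((R:ℝ) * (-δ)) := h3
      _ ≤ Real.exp (Real.log m * (-4)) := h4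
      _ = Real.exp (Real.log m * (-(4:ℝ))) := by norm_num
  have hfinR : μ (g R) ≠ ⊤ := measure_ne_top μ _
  have hμgR : μ (g R) ≤ ENNReal.ofReal ((m:ℝ) ^ (-(4:ℝ))) := by
    rw [← ENNReal.ofReal_toReal hfinR]
    exact ENNReal.ofReal_le_ofReal (le_trans (hgbound R) hpow)
  have hm4pos : (0:ℝ) ≤ (m:ℝ) ^ (-(4:ℝ)) := (Real.rpow_pos_of_pos hmpos _).le
  have hm4le1 : (m:ℝ) ^ (-(4:ℝ)) ≤ 1 :=
    Real.rpow_le_one_of_one_le_of_nonpos (by exact_mod_cast hm0) (by norm_num)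
  calc ENNReal.ofReal (1 - (m:ℝ) ^ (-(4:ℝ)))
      ≤ 1 - ENNReal.ofReal ((m:ℝ) ^ (-(4:ℝ))) := by
        rw [← ENNReal.ofReal_one, ← ENNReal.ofReal_sub _ hm4pos]
    _ ≤ 1 - μ (g R) := tsub_le_tsub_left hμgR 1
    _ = μ ((g R)ᶜ) := (prob_compl_eq_one_sub (hgmeas' R)).symm
    _ ≤ μ {ω : Ω | (∃ t : ℕ, 1 ≤ t ∧ X t ω = 1) ∧
          ((sInf {t : ℕ | 1 ≤ t ∧ X t ω = 1} : ℕ) : ℝ) ≤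
            (10 / (δ * L) + 1) * Real.log m ^ 2} := measure_mono hsub
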